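/- For any odd positive integers w1, w2, w3, any complex number y1, and any nonnegative integer n, the quantity w_{σ(1)}^n Σ_{k=0}^{n} (n choose k) Σ_{a=0}^{w_{σ(1)} d − 1} (−1)^a χ(a) E_{k,χ}(w_{σ(2)} y1 + (w_{σ(2)}/w_{σ(1)}) a) T_{n−k}(w_{σ(3)} d − 1, χ) w_{σ(2)}^{n−k} w_{σ(3)}^{k} is the same for all six permutations σ of {1,2,3}; for example w1^n Σ_{k=0}^{n} (n choose k) Σ_{a=0}^{w1 d − 1} (−1)^a χ(a) E_{k,χ}(w2 y1 + (w2/w1) a) T_{n−k}(w3 d − 1, χ) w2^{n−k} w3^{k} = w3^n Σ_{k=0}^{n} (n choose k) Σ_{a=0}^{w3 d − 1} (−1)^a χ(a) E_{k,χ}(w2 y1 + (w2/w3) a) T_{n−k}(w1 d − 1, χ) w2^{n−k} w1^{k}. -/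

import Mathlib

open Finset

/-- The formal exponential power series `e^{ct} = Σ cⁿ tⁿ/n!` in `ℂ[[t]]`. -/
noncomputable def expPS (c : ℂ) : PowerSeries ℂ :=
  PowerSeries.mk fun n => c ^ n / n.factorial

/-- `Σ_{a=0}^{d-1} (-1)^a χ(a) e^{at}` as a formal power series. -/
noncomputable def altSum (χ : ℤ → ℂ) (d : ℕ) : PowerSeries ℂ :=
  ∑ a ∈ Finset.range d, ((-1 : ℂ) ^ a * χ (a : ℤ)) • expPS (a : ℂ)

/-- `E` is the family of generalized Euler polynomials attached to `χ` mod `d`: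
`(Σ_{n≥0} E_{n,χ}(x) tⁿ/n!) · (e^{dt}+1) = 2 e^{xt} · Σ_{a=0}^{d-1} (-1)^a χ(a) e^{at}`. -/
def IsGenEuler (d : ℕ) (χ : ℤ → ℂ) (E : ℕ → ℂ → ℂ) : Prop :=
  ∀ x : ℂ, (PowerSeries.mk fun n => E n x / n.factorial) * (expPS (d : ℂ) + 1)
    = (2 : PowerSeries ℂ) * expPS x * altSum χ d

/-- The alternating generalized power sum `T_k(n,χ) = Σ_{a=0}^{n} (-1)^a χ(a) a^k`
(with the convention `0^0 = 1`). -/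
noncomputable def altPowSum (χ : ℤ → ℂ) (k n : ℕ) : ℂ :=
  ∑ a ∈ Finset.range (n + 1), (-1 : ℂ) ^ a * χ (a : ℤ) * (a : ℂ) ^ k

/-- The multinomial coefficient `(k+l+m)! / (k! l! m!)`. -/
def multinom (k l m : ℕ) : ℕ :=
  (k + l + m).factorial / (k.factorial * l.factorial * m.factorial)

lemma expPS_eq (c : ℂ) : expPS c = PowerSeries.rescale c (PowerSeries.exp ℂ) := by
  ext n
  simp [expPS, PowerSeries.coeff_rescale, PowerSeries.coeff_exp, div_eq_mul_inv]

lemma expPS_add (a b : ℂ) : expPS a * expPS b = expPS (a + b) := by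
  rw [expPS_eq, expPS_eq, expPS_eq, PowerSeries.exp_mul_exp_eq_exp_add]

lemma rescale_expPS (c x : ℂ) : PowerSeries.rescale c (expPS x) = expPS (x * c) := by
  rw [expPS_eq, PowerSeries.rescale_rescale, ← expPS_eq]

lemma expPS_zero : expPS 0 = 1 := by
  ext n
  cases n <;> simp [expPS, PowerSeries.coeff_one]

lemma expPS_pow (c : ℂ) (m : ℕ) : expPS c ^ m = expPS (m * c) := by
  induction m with
  | zero => simp [expPS_zero]
  | succ m ih => rw [pow_succ, ih, expPS_add]; push_cast; ring_nf

lemma constantCoeff_expPS (c : ℂ) : PowerSeries.constantCoeff (expPS c) = 1 := by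
  simp [expPS, ← PowerSeries.coeff_zero_eq_constantCoeff]


lemma odd_geom {R : Type*} [CommRing R] (X : R) {m : ℕ} (hm : Odd m) :
    (∑ j ∈ Finset.range m, (-1 : R) ^ j * X ^ j) * (X + 1) = X ^ m + 1 := by
  have hev : Even (m - 1) := by
    rcases hm with ⟨t, rfl⟩
    exact ⟨t, by omega⟩
  have h := geom_sum₂_mul X (-1 : R) m
  rw [sub_neg_eq_add, hm.neg_one_pow, sub_neg_eq_add] at h
  rw [← h]
  congr 1
  apply Finset.sum_congr rfl
  intro i hi
  simp only [Finset.mem_range] at hi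
  have h2 : (m - 1 - i) + i = m - 1 := by omega
  have hb : (-1 : R) ^ i * (-1 : R) ^ i = 1 := by
    rw [← pow_add]; exact Even.neg_one_pow ⟨i, rfl⟩
  have key : (-1 : R) ^ (m - 1 - i) = (-1) ^ i := by
    calc (-1 : R) ^ (m - 1 - i) = (-1) ^ (m - 1 - i) * ((-1) ^ i * (-1) ^ i) := by
          rw [hb, mul_one]
      _ = ((-1) ^ (m - 1 - i) * (-1) ^ i) * (-1) ^ i := by ring
      _ = (-1) ^ i := by rw [← pow_add, h2, Even.neg_one_pow hev, one_mul]
  rw [key]; ring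

lemma chi_per_nat (d : ℕ) (χ : ℤ → ℂ) (hper : ∀ a : ℤ, χ (a + d) = χ a)
    (m r : ℕ) : χ ((m * d + r : ℕ) : ℤ) = χ r := by
  induction m with
  | zero => simp
  | succ m ih =>
      have : (((m + 1) * d + r : ℕ) : ℤ) = ((m * d + r : ℕ) : ℤ) + d := by push_cast; ring
      rw [this, hper, ih]

lemma sum_split (d : ℕ) (hd : Odd d) (χ : ℤ → ℂ)
    (hper : ∀ a : ℤ, χ (a + d) = χ a) (m : ℕ) (c : ℂ) :
    ∑ a ∈ Finset.range (m * d),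
        PowerSeries.C ((-1 : ℂ) ^ a * χ a) * expPS (c * a)
    = (∑ j ∈ Finset.range m, PowerSeries.C ((-1 : ℂ) ^ j) * expPS ((d : ℂ) * c * j))
      * ∑ r ∈ Finset.range d, PowerSeries.C ((-1 : ℂ) ^ r * χ r) * expPS (c * r) := by
  induction m with
  | zero => simp
  | succ m ih =>
      rw [Nat.succ_mul, Finset.sum_range_add, ih, Finset.sum_range_succ, add_mul]
      congr 1
      rw [Finset.mul_sum]
      apply Finset.sum_congr rfl
      intro i hi
      have h1 : ((-1 : ℂ)) ^ (m * d + i) = (-1) ^ m * ((-1) ^ i) := by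
        rcases hd with ⟨t, rfl⟩
        rw [show m * (2 * t + 1) + i = 2 * (m * t) + (m + i) from by ring, pow_add, pow_mul,
          pow_add]
        simp
      have h2 : χ ((m * d + i : ℕ) : ℤ) = χ i := chi_per_nat d χ hper m i
      have h3 : expPS (c * ((m * d + i : ℕ) : ℂ))
          = expPS ((d : ℂ) * c * m) * expPS (c * i) := by
        rw [expPS_add]; congr 1; push_cast; ring
      rw [h1, h2, h3]
      simp only [map_mul]
      ring

noncomputable def altScaled (χ : ℤ → ℂ) (d : ℕ) (c : ℂ) : PowerSeries ℂ :=
  ∑ r ∈ Finset.range d, PowerSeries.C ((-1 : ℂ) ^ r * χ r) * expPS (c * r)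

lemma rescale_altSum (χ : ℤ → ℂ) (d : ℕ) (c : ℂ) :
    PowerSeries.rescale c (altSum χ d) = altScaled χ d c := by
  unfold altSum altScaled
  ext n
  rw [PowerSeries.coeff_rescale, map_sum, map_sum, Finset.mul_sum]
  apply Finset.sum_congr rfl
  intro r _
  rw [PowerSeries.coeff_C_mul, map_smul, smul_eq_mul]
  unfold expPS
  rw [PowerSeries.coeff_mk, PowerSeries.coeff_mk, mul_pow]
  ring

lemma euler_rescaled (d : ℕ) (χ : ℤ → ℂ) (E : ℕ → ℂ → ℂ) (hE : IsGenEuler d χ E)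
    (x c : ℂ) :
    (PowerSeries.mk fun k => E k x * c ^ k / k.factorial) * (expPS ((d : ℂ) * c) + 1)
      = 2 * expPS (x * c) * altScaled χ d c := by
  have h := congrArg (PowerSeries.rescale c) (hE x)
  have hmk : PowerSeries.rescale c (PowerSeries.mk fun n => E n x / n.factorial)
      = PowerSeries.mk fun n => E n x * c ^ n / n.factorial := by
    ext n; simp [PowerSeries.coeff_rescale, PowerSeries.coeff_mk]; ring
  have h2 : PowerSeries.rescale c (2 : PowerSeries ℂ) = 2 := by
    simp [map_ofNat]
  rw [map_mul, map_mul, map_mul, map_add, map_one, hmk, rescale_expPS, rescale_expPS,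
    rescale_altSum, h2] at h
  exact h

lemma geom_expPS (b : ℂ) {m : ℕ} (hm : Odd m) :
    (∑ j ∈ Finset.range m, PowerSeries.C ((-1 : ℂ) ^ j) * expPS (b * j))
      * (expPS b + 1) = expPS (m * b) + 1 := by
  have h := odd_geom (expPS b) hm
  rw [← expPS_pow] at *
  rw [← h]
  congr 1
  apply Finset.sum_congr rfl
  intro j _
  rw [expPS_pow, map_pow, map_neg, map_one, mul_comm b (j : ℂ)]

lemma Tfac (d : ℕ) (χ : ℤ → ℂ) (v2 : ℕ) (h : 0 < v2 * d) (c : ℂ) :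
    (PowerSeries.mk fun m => altPowSum χ m (v2 * d - 1) * c ^ m / m.factorial)
      = ∑ b ∈ Finset.range (v2 * d), PowerSeries.C ((-1 : ℂ) ^ b * χ b) * expPS (c * b) := by
  ext n
  rw [PowerSeries.coeff_mk, map_sum]
  simp only [PowerSeries.coeff_C_mul]
  unfold altPowSum expPS
  rw [Nat.sub_add_cancel h, Finset.sum_mul, Finset.sum_div]
  apply Finset.sum_congr rfl
  intro b _
  rw [PowerSeries.coeff_mk]
  rw [mul_pow]
  ring

noncomputable def Aux (d : ℕ) (χ : ℤ → ℂ) (E : ℕ → ℂ → ℂ) (y1 : ℂ)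
    (v0 v1 v2 : ℕ) : PowerSeries ℂ :=
  (PowerSeries.mk fun k =>
      (∑ a ∈ Finset.range (v0 * d), (-1 : ℂ) ^ a * χ a *
        E k ((v1 : ℂ) * y1 + (v1 : ℂ) / (v0 : ℂ) * a)) * ((v0 : ℂ) * v2) ^ k / k.factorial)
    * PowerSeries.mk fun m => altPowSum χ m (v2 * d - 1) * ((v0 : ℂ) * v1) ^ m / m.factorial

lemma Efac_expand (d : ℕ) (χ : ℤ → ℂ) (E : ℕ → ℂ → ℂ) (y1 : ℂ) (v0 v1 v2 : ℕ) :
    (PowerSeries.mk fun k =>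
      (∑ a ∈ Finset.range (v0 * d), (-1 : ℂ) ^ a * χ a *
        E k ((v1 : ℂ) * y1 + (v1 : ℂ) / (v0 : ℂ) * a)) * ((v0 : ℂ) * v2) ^ k / k.factorial)
    = ∑ a ∈ Finset.range (v0 * d), PowerSeries.C ((-1 : ℂ) ^ a * χ a) *
        PowerSeries.mk (fun k =>
          E k ((v1 : ℂ) * y1 + (v1 : ℂ) / (v0 : ℂ) * a) * ((v0 : ℂ) * v2) ^ k / k.factorial) := by
  ext n
  rw [PowerSeries.coeff_mk, map_sum, Finset.sum_mul, Finset.sum_div]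
  apply Finset.sum_congr rfl
  intro a _
  rw [PowerSeries.coeff_C_mul, PowerSeries.coeff_mk]
  ring

lemma Efac_total (d : ℕ) (hd : Odd d) (χ : ℤ → ℂ)
    (hper : ∀ a : ℤ, χ (a + d) = χ a) (E : ℕ → ℂ → ℂ) (hE : IsGenEuler d χ E)
    (y1 : ℂ) (v0 v1 v2 : ℕ) (h0 : 0 < v0) (ho0 : Odd v0) :
    (PowerSeries.mk fun k =>
      (∑ a ∈ Finset.range (v0 * d), (-1 : ℂ) ^ a * χ a *
        E k ((v1 : ℂ) * y1 + (v1 : ℂ) / (v0 : ℂ) * a)) * ((v0 : ℂ) * v2) ^ k / k.factorial)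
      * ((expPS ((d : ℂ) * ((v0 : ℂ) * v2)) + 1) * (expPS ((d : ℂ) * ((v1 : ℂ) * v2)) + 1))
    = 2 * expPS ((v0 : ℂ) * v1 * v2 * y1) * (expPS ((d : ℂ) * ((v0 : ℂ) * v1 * v2)) + 1)
      * (altScaled χ d ((v1 : ℂ) * v2) * altScaled χ d ((v0 : ℂ) * v2)) := by
  have hv0 : (v0 : ℂ) ≠ 0 := Nat.cast_ne_zero.mpr h0.ne'
  rw [Efac_expand, ← mul_assoc]
  have step1 :
      (∑ a ∈ Finset.range (v0 * d), PowerSeries.C ((-1 : ℂ) ^ a * χ a) *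
        PowerSeries.mk (fun k =>
          E k ((v1 : ℂ) * y1 + (v1 : ℂ) / (v0 : ℂ) * a) * ((v0 : ℂ) * v2) ^ k / k.factorial))
      * (expPS ((d : ℂ) * ((v0 : ℂ) * v2)) + 1)
      = 2 * expPS ((v0 : ℂ) * v1 * v2 * y1) * altScaled χ d ((v0 : ℂ) * v2)
        * ∑ a ∈ Finset.range (v0 * d), PowerSeries.C ((-1 : ℂ) ^ a * χ a) *
            expPS (((v1 : ℂ) * v2) * a) := by
    rw [Finset.sum_mul, Finset.mul_sum]
    apply Finset.sum_congr rfl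
    intro a _
    rw [mul_assoc, euler_rescaled d χ E hE _ ((v0 : ℂ) * v2)]
    have harg : ((v1 : ℂ) * y1 + (v1 : ℂ) / (v0 : ℂ) * a) * ((v0 : ℂ) * v2)
        = (v0 : ℂ) * v1 * v2 * y1 + ((v1 : ℂ) * v2) * a := by
      field_simp
    rw [harg, ← expPS_add]
    ring
  rw [step1, mul_assoc, sum_split d hd χ hper v0 ((v1 : ℂ) * v2)]
  have g := geom_expPS ((d : ℂ) * ((v1 : ℂ) * v2)) ho0
  have harg2 : (v0 : ℂ) * ((d : ℂ) * ((v1 : ℂ) * v2)) = (d : ℂ) * ((v0 : ℂ) * v1 * v2) := by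
    ring
  rw [harg2] at g
  calc 2 * expPS ((v0 : ℂ) * v1 * v2 * y1) * altScaled χ d ((v0 : ℂ) * v2)
        * ((∑ j ∈ Finset.range v0, PowerSeries.C ((-1 : ℂ) ^ j) *
            expPS ((d : ℂ) * ((v1 : ℂ) * v2) * j)) * altScaled χ d ((v1 : ℂ) * v2)
          * (expPS ((d : ℂ) * ((v1 : ℂ) * v2)) + 1))
      = ((∑ j ∈ Finset.range v0, PowerSeries.C ((-1 : ℂ) ^ j) *
            expPS ((d : ℂ) * ((v1 : ℂ) * v2) * j)) * (expPS ((d : ℂ) * ((v1 : ℂ) * v2)) + 1))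
          * (2 * expPS ((v0 : ℂ) * v1 * v2 * y1) * altScaled χ d ((v0 : ℂ) * v2)
            * altScaled χ d ((v1 : ℂ) * v2)) := by ring
    _ = _ := by rw [g]; ring

lemma Tfac_total (d : ℕ) (hd : Odd d) (hd0 : 0 < d) (χ : ℤ → ℂ)
    (hper : ∀ a : ℤ, χ (a + d) = χ a) (v0 v1 v2 : ℕ) (h2 : 0 < v2) (ho2 : Odd v2) :
    (PowerSeries.mk fun m => altPowSum χ m (v2 * d - 1) * ((v0 : ℂ) * v1) ^ m / m.factorial)
      * (expPS ((d : ℂ) * ((v0 : ℂ) * v1)) + 1)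
    = (expPS ((d : ℂ) * ((v0 : ℂ) * v1 * v2)) + 1) * altScaled χ d ((v0 : ℂ) * v1) := by
  rw [Tfac d χ v2 (Nat.mul_pos h2 hd0), sum_split d hd χ hper v2 ((v0 : ℂ) * v1)]
  have g := geom_expPS ((d : ℂ) * ((v0 : ℂ) * v1)) ho2
  have harg : (v2 : ℂ) * ((d : ℂ) * ((v0 : ℂ) * v1)) = (d : ℂ) * ((v0 : ℂ) * v1 * v2) := by
    ring
  rw [harg] at g
  calc (∑ j ∈ Finset.range v2, PowerSeries.C ((-1 : ℂ) ^ j) *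
          expPS ((d : ℂ) * ((v0 : ℂ) * v1) * j)) * altScaled χ d ((v0 : ℂ) * v1)
        * (expPS ((d : ℂ) * ((v0 : ℂ) * v1)) + 1)
      = ((∑ j ∈ Finset.range v2, PowerSeries.C ((-1 : ℂ) ^ j) *
          expPS ((d : ℂ) * ((v0 : ℂ) * v1) * j)) * (expPS ((d : ℂ) * ((v0 : ℂ) * v1)) + 1))
        * altScaled χ d ((v0 : ℂ) * v1) := by ring
    _ = _ := by rw [g]

lemma main_identity (d : ℕ) (hd : Odd d) (hd0 : 0 < d) (χ : ℤ → ℂ)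
    (hper : ∀ a : ℤ, χ (a + d) = χ a) (E : ℕ → ℂ → ℂ) (hE : IsGenEuler d χ E)
    (y1 : ℂ) (v0 v1 v2 : ℕ) (h0 : 0 < v0) (h2 : 0 < v2) (ho0 : Odd v0) (ho2 : Odd v2) :
    Aux d χ E y1 v0 v1 v2 *
      ((expPS ((d : ℂ) * ((v0 : ℂ) * v1)) + 1) * (expPS ((d : ℂ) * ((v0 : ℂ) * v2)) + 1)
        * (expPS ((d : ℂ) * ((v1 : ℂ) * v2)) + 1))
    = 2 * expPS ((v0 : ℂ) * v1 * v2 * y1) * (expPS ((d : ℂ) * ((v0 : ℂ) * v1 * v2)) + 1) ^ 2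
      * (altScaled χ d ((v0 : ℂ) * v1) *
          (altScaled χ d ((v0 : ℂ) * v2) * altScaled χ d ((v1 : ℂ) * v2))) := by
  unfold Aux
  have hT := Tfac_total d hd hd0 χ hper v0 v1 v2 h2 ho2
  have hEt := Efac_total d hd χ hper E hE y1 v0 v1 v2 h0 ho0
  calc (PowerSeries.mk fun k =>
      (∑ a ∈ Finset.range (v0 * d), (-1 : ℂ) ^ a * χ a *
        E k ((v1 : ℂ) * y1 + (v1 : ℂ) / (v0 : ℂ) * a)) * ((v0 : ℂ) * v2) ^ k / k.factorial)
    * (PowerSeries.mk fun m => altPowSum χ m (v2 * d - 1) * ((v0 : ℂ) * v1) ^ m / m.factorial)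
    * ((expPS ((d : ℂ) * ((v0 : ℂ) * v1)) + 1) * (expPS ((d : ℂ) * ((v0 : ℂ) * v2)) + 1)
        * (expPS ((d : ℂ) * ((v1 : ℂ) * v2)) + 1))
      = ((PowerSeries.mk fun k =>
      (∑ a ∈ Finset.range (v0 * d), (-1 : ℂ) ^ a * χ a *
        E k ((v1 : ℂ) * y1 + (v1 : ℂ) / (v0 : ℂ) * a)) * ((v0 : ℂ) * v2) ^ k / k.factorial)
        * ((expPS ((d : ℂ) * ((v0 : ℂ) * v2)) + 1) * (expPS ((d : ℂ) * ((v1 : ℂ) * v2)) + 1)))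
        * ((PowerSeries.mk fun m =>
            altPowSum χ m (v2 * d - 1) * ((v0 : ℂ) * v1) ^ m / m.factorial)
          * (expPS ((d : ℂ) * ((v0 : ℂ) * v1)) + 1)) := by ring
    _ = _ := by rw [hT, hEt]; ring

lemma coeff_Aux (d : ℕ) (χ : ℤ → ℂ) (E : ℕ → ℂ → ℂ) (y1 : ℂ) (v0 v1 v2 : ℕ) (n : ℕ) :
    ((v0 : ℂ) ^ n * ∑ k ∈ Finset.range (n + 1),
      (n.choose k : ℂ) *
        (∑ a ∈ Finset.range (v0 * d), (-1 : ℂ) ^ a * χ (a : ℤ) *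
          E k ((v1 : ℂ) * y1 + (v1 : ℂ) / (v0 : ℂ) * (a : ℂ))) *
        altPowSum χ (n - k) (v2 * d - 1) *
        (v1 : ℂ) ^ (n - k) * (v2 : ℂ) ^ k)
    = (n.factorial : ℂ) * PowerSeries.coeff n (Aux d χ E y1 v0 v1 v2) := by
  rw [Aux, PowerSeries.coeff_mul, Finset.Nat.sum_antidiagonal_eq_sum_range_succ_mk,
    Finset.mul_sum, Finset.mul_sum]
  apply Finset.sum_congr rfl
  intro k hk
  have hk' : k ≤ n := Nat.lt_succ_iff.mp (Finset.mem_range.mp hk)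
  rw [PowerSeries.coeff_mk, PowerSeries.coeff_mk, Nat.cast_choose ℂ hk']
  have h1 : (k.factorial : ℂ) ≠ 0 := Nat.cast_ne_zero.mpr k.factorial_ne_zero
  have h2 : ((n - k).factorial : ℂ) ≠ 0 := Nat.cast_ne_zero.mpr (n - k).factorial_ne_zero
  have hpow : (v0 : ℂ) ^ n = (v0 : ℂ) ^ k * (v0 : ℂ) ^ (n - k) := by
    rw [← pow_add]; congr 1; omega
  rw [hpow, mul_pow, mul_pow]
  field_simp

lemma Pne (c : ℂ) : expPS c + 1 ≠ 0 := by
  intro h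
  have := congrArg (PowerSeries.constantCoeff) h
  rw [map_add, map_one, constantCoeff_expPS, map_zero] at this
  norm_num at this

lemma Mne (a b c : ℂ) :
    (expPS a + 1) * (expPS b + 1) * (expPS c + 1) ≠ 0 :=
  mul_ne_zero (mul_ne_zero (Pne a) (Pne b)) (Pne c)

lemma Aux_swap01 (d : ℕ) (hd : Odd d) (hd0 : 0 < d) (χ : ℤ → ℂ)
    (hper : ∀ a : ℤ, χ (a + d) = χ a) (E : ℕ → ℂ → ℂ) (hE : IsGenEuler d χ E)
    (y1 : ℂ) (v0 v1 v2 : ℕ) (h0 : 0 < v0) (h1 : 0 < v1) (h2 : 0 < v2)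
    (ho0 : Odd v0) (ho1 : Odd v1) (ho2 : Odd v2) :
    Aux d χ E y1 v0 v1 v2 = Aux d χ E y1 v1 v0 v2 := by
  apply mul_right_cancel₀ (Mne ((d : ℂ) * ((v0 : ℂ) * v1)) ((d : ℂ) * ((v0 : ℂ) * v2))
    ((d : ℂ) * ((v1 : ℂ) * v2)))
  rw [main_identity d hd hd0 χ hper E hE y1 v0 v1 v2 h0 h2 ho0 ho2]
  have h := main_identity d hd hd0 χ hper E hE y1 v1 v0 v2 h1 h2 ho1 ho2
  rw [show (v1 : ℂ) * v0 = (v0 : ℂ) * v1 from by ring] at h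
  linear_combination -h

lemma Aux_swap12 (d : ℕ) (hd : Odd d) (hd0 : 0 < d) (χ : ℤ → ℂ)
    (hper : ∀ a : ℤ, χ (a + d) = χ a) (E : ℕ → ℂ → ℂ) (hE : IsGenEuler d χ E)
    (y1 : ℂ) (v0 v1 v2 : ℕ) (h0 : 0 < v0) (h1 : 0 < v1) (h2 : 0 < v2)
    (ho0 : Odd v0) (ho1 : Odd v1) (ho2 : Odd v2) :
    Aux d χ E y1 v0 v1 v2 = Aux d χ E y1 v0 v2 v1 := by
  apply mul_right_cancel₀ (Mne ((d : ℂ) * ((v0 : ℂ) * v1)) ((d : ℂ) * ((v0 : ℂ) * v2))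
    ((d : ℂ) * ((v1 : ℂ) * v2)))
  rw [main_identity d hd hd0 χ hper E hE y1 v0 v1 v2 h0 h2 ho0 ho2]
  have h := main_identity d hd hd0 χ hper E hE y1 v0 v2 v1 h0 h1 ho0 ho1
  rw [show (v0 : ℂ) * v2 * v1 = (v0 : ℂ) * v1 * v2 from by ring,
    show (v2 : ℂ) * v1 = (v1 : ℂ) * v2 from by ring] at h
  linear_combination -h

/-- Theorem 5: the quantity
`w₁ⁿ Σ_k C(n,k) Σ_{a=0}^{w₁d-1} (-1)^a χ(a) E_{k,χ}(w₂y₁ + (w₂/w₁)a) T_{n-k}(w₃d-1,χ) w₂^{n-k} w₃^k`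
is invariant under all six permutations of `(w₁, w₂, w₃)` (all odd). -/
theorem stmt_4 (d : ℕ) (hd : Odd d) (hd0 : 0 < d) (χ : ℤ → ℂ)
    (hper : ∀ a : ℤ, χ (a + d) = χ a)
    (hmul : ∀ a b : ℤ, χ (a * b) = χ a * χ b) (hone : χ 1 = 1)
    (hvan : ∀ a : ℤ, 1 < Int.gcd a d → χ a = 0)
    (E : ℕ → ℂ → ℂ) (hE : IsGenEuler d χ E)
    (w : Fin 3 → ℕ) (hw : ∀ i, 0 < w i) (hwodd : ∀ i, Odd (w i))
    (y1 : ℂ) (n : ℕ) (σ : Equiv.Perm (Fin 3)) :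
    ((w (σ 0) : ℂ) ^ n * ∑ k ∈ range (n + 1),
      (n.choose k : ℂ) *
        (∑ a ∈ range (w (σ 0) * d), (-1 : ℂ) ^ a * χ (a : ℤ) *
          E k ((w (σ 1) : ℂ) * y1 + (w (σ 1) : ℂ) / (w (σ 0) : ℂ) * (a : ℂ))) *
        altPowSum χ (n - k) (w (σ 2) * d - 1) *
        (w (σ 1) : ℂ) ^ (n - k) * (w (σ 2) : ℂ) ^ k)
    = (w 0 : ℂ) ^ n * ∑ k ∈ range (n + 1),
      (n.choose k : ℂ) *
        (∑ a ∈ range (w 0 * d), (-1 : ℂ) ^ a * χ (a : ℤ) *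
          E k ((w 1 : ℂ) * y1 + (w 1 : ℂ) / (w 0 : ℂ) * (a : ℂ))) *
        altPowSum χ (n - k) (w 2 * d - 1) *
        (w 1 : ℂ) ^ (n - k) * (w 2 : ℂ) ^ k := by
  
  rw [coeff_Aux d χ E y1 (w (σ 0)) (w (σ 1)) (w (σ 2)) n,
    coeff_Aux d χ E y1 (w 0) (w 1) (w 2) n]
  have S01 : ∀ a b c : Fin 3, Aux d χ E y1 (w a) (w b) (w c) = Aux d χ E y1 (w b) (w a) (w c) :=
    fun a b c => Aux_swap01 d hd hd0 χ hper E hE y1 (w a) (w b) (w c)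
      (hw a) (hw b) (hw c) (hwodd a) (hwodd b) (hwodd c)
  have S12 : ∀ a b c : Fin 3, Aux d χ E y1 (w a) (w b) (w c) = Aux d χ E y1 (w a) (w c) (w b) :=
    fun a b c => Aux_swap12 d hd hd0 χ hper E hE y1 (w a) (w b) (w c)
      (hw a) (hw b) (hw c) (hwodd a) (hwodd b) (hwodd c)
  have hperm : Aux d χ E y1 (w (σ 0)) (w (σ 1)) (w (σ 2)) = Aux d χ E y1 (w 0) (w 1) (w 2) := by
    have key : ∀ i j k : Fin 3, i ≠ j → i ≠ k → j ≠ k →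
        Aux d χ E y1 (w i) (w j) (w k) = Aux d χ E y1 (w 0) (w 1) (w 2) := by
      intro i j k hij hik hjk
      fin_cases i <;> fin_cases j <;> fin_cases k <;> simp at hij hik hjk ⊢ <;>
      first
        | with_reducible rfl
        | with_reducible exact S01 _ _ _
        | with_reducible exact S12 _ _ _
        | with_reducible exact (S12 _ _ _).trans (S01 _ _ _)
        | with_reducible exact (S01 _ _ _).trans (S12 _ _ _)
        | with_reducible exact (S01 _ _ _).trans ((S12 _ _ _).trans (S01 _ _ _))
    exact key _ _ _ (σ.injective.ne (by decide)) (σ.injective.ne (by decide))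
      (σ.injective.ne (by decide))
  rw [hperm]
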